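/- Let X be a set, (S_n) a sequence of finite covers of X, Γ a curve family in X, and q > p ≥ 1. Assume mod_p(Γ,S_n) > 0 for all n, and that there is a sequence (η_n) of positive numbers tending to zero such that sup_{s∈S_n} mod_q(Γ(s),S_n) ≤ η_n for all n. Then the ratio mod_q(Γ,S_n)/mod_p(Γ,S_n) tends to 0 as n → ∞. -/

import Mathlib

open scoped ENNReal
open Set

attribute [local instance] Classical.propDecidable

namespace CombModFin

variable {X : Type*}

/-- The `ρ`-length of a set `K`: the sum of `ρ s` over the elements `s` of the cover `S`
    meeting `K`. -/
noncomputable def len (S : Finset (Set X)) (ρ : Set X → ℝ≥0∞) (K : Set X) : ℝ≥0∞ :=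
  ∑ s ∈ S.filter fun s => (s ∩ K).Nonempty, ρ s

/-- `L_ρ(Γ,S)`: the infimum of the `ρ`-lengths of the curves of `Γ`. -/
noncomputable def Lmin (S : Finset (Set X)) (ρ : Set X → ℝ≥0∞) (Γ : Set (Set X)) : ℝ≥0∞ :=
  ⨅ γ ∈ Γ, len S ρ γ

/-- `V_p(ρ)`: the `p`-volume of the admissible metric `ρ`. -/
noncomputable def vol (S : Finset (Set X)) (ρ : Set X → ℝ≥0∞) (p : ℝ) : ℝ≥0∞ :=
  ∑ s ∈ S, ρ s ^ p

/-- An admissible metric: a function `ρ : S → [0,∞)` which is not identically zero on `S`. -/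
def Admissible (S : Finset (Set X)) (ρ : Set X → ℝ≥0∞) : Prop :=
  (∀ s ∈ S, ρ s ≠ ∞) ∧ ∃ s ∈ S, ρ s ≠ 0

/-- `mod_p(Γ,ρ,S) = V_p(ρ) / L_ρ(Γ,S)^p`. -/
noncomputable def modWith (S : Finset (Set X)) (Γ : Set (Set X)) (ρ : Set X → ℝ≥0∞)
    (p : ℝ) : ℝ≥0∞ :=
  vol S ρ p / Lmin S ρ Γ ^ p

/-- The combinatorial `p`-modulus: the infimum of `mod_p(Γ,ρ,S)` over admissible metrics `ρ`. -/
noncomputable def cmod (S : Finset (Set X)) (Γ : Set (Set X)) (p : ℝ) : ℝ≥0∞ :=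
  ⨅ (ρ : Set X → ℝ≥0∞) (_ : Admissible S ρ), modWith S Γ ρ p

-- Auxiliary lemmas


lemma len_le_len (T : Finset (Set X)) {ρ σ : Set X → ℝ≥0∞} (h : ∀ u ∈ T, ρ u ≤ σ u)
    (K : Set X) : len T ρ K ≤ len T σ K :=
  Finset.sum_le_sum fun u hu => h u (Finset.mem_filter.mp hu).1

lemma len_ne_top (T : Finset (Set X)) {ρ : Set X → ℝ≥0∞} (h : ∀ u ∈ T, ρ u ≠ ∞)
    (K : Set X) : len T ρ K ≠ ∞ := by
  refine (ENNReal.sum_lt_top.mpr fun u hu => ?_).ne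
  exact (h u (Finset.mem_filter.mp hu).1).lt_top

lemma vol_ne_zero (T : Finset (Set X)) {ρ : Set X → ℝ≥0∞} {r : ℝ} (hr : 0 < r)
    (h : ∃ s ∈ T, ρ s ≠ 0) : vol T ρ r ≠ 0 := by
  obtain ⟨s, hs, hs0⟩ := h
  have h1 : ρ s ^ r ≠ 0 := by
    simp [ENNReal.rpow_eq_zero_iff, hs0, not_lt.mpr hr.le]
  intro h0
  apply h1
  have h2 : ρ s ^ r ≤ vol T ρ r :=
    Finset.single_le_sum (f := fun u => ρ u ^ r) (fun i _ => zero_le) hs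
  rw [h0] at h2
  exact le_antisymm h2 (zero_le)

lemma sup_rpow_le {ι : Type*} (B : Finset ι) (g : ι → ℝ≥0∞) {q : ℝ} (hq : 0 < q) :
    (B.sup g) ^ q ≤ ∑ s ∈ B, g s ^ q := by
  rcases B.eq_empty_or_nonempty with rfl | hB
  · simp [ENNReal.zero_rpow_of_pos hq]
  · obtain ⟨s, hs, hsup⟩ := Finset.exists_mem_eq_sup B hB g
    rw [hsup]
    exact Finset.single_le_sum (f := fun s => g s ^ q) (fun i _ => zero_le) hs

lemma normalize (T : Finset (Set X)) (Δ : Set (Set X)) (r : ℝ) (hr : 0 < r)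
    (c : ℝ≥0∞) (hc : c ≠ ∞) (hlt : cmod T Δ r < c) {γ1 : Set X} (hγ1 : γ1 ∈ Δ) :
    ∃ τ : Set X → ℝ≥0∞, (∀ u ∈ T, τ u ≠ ∞) ∧ (∀ γ ∈ Δ, 1 ≤ len T τ γ) ∧
      vol T τ r < c := by
  obtain ⟨ρ, hρ⟩ := iInf_lt_iff.mp hlt
  obtain ⟨hadm, hmod⟩ := iInf_lt_iff.mp hρ
  set L := Lmin T ρ Δ with hL
  have hLle : ∀ γ ∈ Δ, L ≤ len T ρ γ := fun γ hγ => iInf₂_le γ hγ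
  have hLtop : L ≠ ∞ := ((hLle γ1 hγ1).trans_lt (len_ne_top T hadm.1 γ1).lt_top).ne
  have hvol0 : vol T ρ r ≠ 0 := vol_ne_zero T hr hadm.2
  have hL0 : L ≠ 0 := by
    intro h0
    rw [modWith, ← hL, h0, ENNReal.zero_rpow_of_pos hr, ENNReal.div_zero hvol0] at hmod
    exact absurd hmod (not_lt.mpr le_top)
  refine ⟨fun u => ρ u / L, ?_, ?_, ?_⟩
  · intro u hu
    simp only [div_eq_mul_inv]
    exact ENNReal.mul_ne_top (hadm.1 u hu) (ENNReal.inv_ne_top.mpr hL0)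
  · intro γ hγ
    have : len T (fun u => ρ u / L) γ = len T ρ γ / L := by
      simp only [len, div_eq_mul_inv, Finset.sum_mul]
    rw [this]
    calc (1 : ℝ≥0∞) = L / L := (ENNReal.div_self hL0 hLtop).symm
      _ ≤ len T ρ γ / L := ENNReal.div_le_div_right (hLle γ hγ) _
  · have : vol T (fun u => ρ u / L) r = vol T ρ r / L ^ r := by
      rw [vol, vol, Finset.sum_congr rfl fun u _ => ENNReal.div_rpow_of_nonneg (ρ u) L hr.le]
      simp only [div_eq_mul_inv, Finset.sum_mul]
    rw [this]
    exact hmod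



lemma key {X : Type*} (T : Finset (Set X)) (Γ : Set (Set X)) (p q : ℝ)
    (hp : 1 ≤ p) (hpq : p < q)
    (hpos : 0 < cmod T Γ p) (η : ℝ) (hη : 0 < η)
    (hsup : ∀ s ∈ T, cmod T {γ ∈ Γ | (γ ∩ s).Nonempty} q ≤ ENNReal.ofReal η) :
    cmod T Γ q / cmod T Γ p ≤ 6 * ENNReal.ofReal η ^ ((q - p) / q) := by
  have hp0 : 0 < p := lt_of_lt_of_le one_pos hp
  have hq0 : 0 < q := hp0.trans hpq
  have hqne : q ≠ 0 := hq0.ne'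
  set α := (q - p) / q with hα
  set M := cmod T Γ p with hM
  by_cases hMtop : M = ∞
  · rw [hMtop, ENNReal.div_top]; exact zero_le
  have hM0 : M ≠ 0 := hpos.ne'
  -- Γ is nonempty
  have hΓne : Γ.Nonempty := by
    rw [Set.nonempty_iff_ne_empty]
    intro h
    rw [h] at hM
    have hLinf : ∀ ρ : Set X → ℝ≥0∞, modWith T (∅ : Set (Set X)) ρ p = 0 := by
      intro ρ
      simp [modWith, Lmin, ENNReal.top_rpow_of_pos hp0, ENNReal.div_top]
    by_cases hadm : ∃ ρ : Set X → ℝ≥0∞, Admissible T ρ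
    · obtain ⟨ρ, hρ⟩ := hadm
      have h1 : cmod T (∅ : Set (Set X)) p ≤ 0 :=
        le_trans (iInf₂_le ρ hρ) (hLinf ρ).le
      rw [← hM, le_zero_iff] at h1
      exact hM0 h1
    · apply hMtop
      rw [hM, cmod]
      rw [iInf_eq_top]
      intro ρ
      rw [iInf_eq_top]
      intro hρ
      exact absurd ⟨ρ, hρ⟩ hadm
  obtain ⟨γ0, hγ0⟩ := hΓne
  set η' := ENNReal.ofReal η with hη'
  have hη'0 : η' ≠ 0 := (ENNReal.ofReal_pos.mpr hη).ne'
  have hη'top : η' ≠ ∞ := ENNReal.ofReal_ne_top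
  set t := η' ^ (1 / q) with ht
  have ht0 : t ≠ 0 := by
    simp [ht, ENNReal.rpow_eq_zero_iff, hη'0, hη'top]
  have httop : t ≠ ∞ := ENNReal.rpow_ne_top_of_nonneg (by positivity) hη'top
  have htp0 : t ^ p ≠ 0 := by
    simp [ENNReal.rpow_eq_zero_iff, ht0, httop]
  have htptop : t ^ p ≠ ∞ := ENNReal.rpow_ne_top_of_nonneg hp0.le httop
  -- normalized near-optimal metric for `p`
  have h2M : (2 : ℝ≥0∞) * M ≠ ∞ := ENNReal.mul_ne_top (by norm_num) hMtop
  have hMlt : M < 2 * M := by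
    rw [two_mul]; exact ENNReal.lt_add_right hMtop hM0
  obtain ⟨ρ, hρfin, hρlen, hρvol⟩ := normalize T Γ p hp0 (2 * M) h2M hMlt hγ0
  -- normalized near-optimal metrics for the families Γ(s)
  have h2η : (2 : ℝ≥0∞) * η' ≠ ∞ := ENNReal.mul_ne_top (by norm_num) hη'top
  have hτex : ∀ s : Set X, ∃ τ : Set X → ℝ≥0∞,
      s ∈ T → (∀ u ∈ T, τ u ≠ ∞) ∧
        (∀ γ ∈ {γ ∈ Γ | (γ ∩ s).Nonempty}, 1 ≤ len T τ γ) ∧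
        vol T τ q ≤ 2 * η' := by
    intro s
    by_cases hs : s ∈ T
    · by_cases hne : {γ ∈ Γ | (γ ∩ s).Nonempty}.Nonempty
      · obtain ⟨γ1, hγ1⟩ := hne
        have hlt : cmod T {γ ∈ Γ | (γ ∩ s).Nonempty} q < 2 * η' :=
          lt_of_le_of_lt (hsup s hs)
            (by rw [two_mul]; exact ENNReal.lt_add_right hη'top hη'0)
        obtain ⟨τ, h1, h2, h3⟩ := normalize T _ q hq0 (2 * η') h2η hlt hγ1
        exact ⟨τ, fun _ => ⟨h1, h2, h3.le⟩⟩
      · refine ⟨fun _ => 0, fun _ => ⟨by simp, ?_, ?_⟩⟩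
        · intro γ hγ; exact absurd ⟨γ, hγ⟩ hne
        · simp [vol, ENNReal.zero_rpow_of_pos hq0]
    · exact ⟨fun _ => 0, fun h => absurd h hs⟩
  choose τ hτ using hτex
  set B := T.filter (fun s => t < ρ s) with hBdef
  set σ := fun u => max (min (ρ u) t) (B.sup fun s => τ s u) with hσ
  -- the length of every curve is at least 1
  have hσlen : ∀ γ ∈ Γ, 1 ≤ len T σ γ := by
    intro γ hγ
    by_cases hmeet : ∃ s ∈ B, (s ∩ γ).Nonempty
    · obtain ⟨s, hsB, hsγ⟩ := hmeet
      have hsT : s ∈ T := (Finset.mem_filter.mp hsB).1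
      have hγs : γ ∈ {γ ∈ Γ | (γ ∩ s).Nonempty} := ⟨hγ, by rwa [Set.inter_comm]⟩
      calc (1 : ℝ≥0∞) ≤ len T (τ s) γ := (hτ s hsT).2.1 γ hγs
        _ ≤ len T σ γ := len_le_len T (fun u _ =>
            le_trans (Finset.le_sup (f := fun s => τ s u) hsB) (le_max_right _ _)) γ
    · calc (1 : ℝ≥0∞) ≤ len T ρ γ := hρlen γ hγ
        _ ≤ len T σ γ := by
          apply Finset.sum_le_sum
          intro u hu
          obtain ⟨huT, huγ⟩ := Finset.mem_filter.mp hu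
          have hucond : ¬ t < ρ u := fun h' =>
            hmeet ⟨u, Finset.mem_filter.mpr ⟨huT, h'⟩, huγ⟩
          calc ρ u = min (ρ u) t := (min_eq_left (not_lt.mp hucond)).symm
            _ ≤ σ u := le_max_left _ _
  have hLσ : 1 ≤ Lmin T σ Γ := le_iInf₂ hσlen
  -- cardinality of B
  have hcard : (B.card : ℝ≥0∞) * t ^ p ≤ vol T ρ p := by
    calc (B.card : ℝ≥0∞) * t ^ p = ∑ _s ∈ B, t ^ p := by
          rw [Finset.sum_const, nsmul_eq_mul]
      _ ≤ ∑ s ∈ B, ρ s ^ p := Finset.sum_le_sum fun s hs =>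
          ENNReal.rpow_le_rpow (le_of_lt (Finset.mem_filter.mp hs).2) hp0.le
      _ ≤ ∑ s ∈ T, ρ s ^ p :=
          Finset.sum_le_sum_of_subset (Finset.filter_subset _ _)
      _ = vol T ρ p := rfl
  have hcard' : (B.card : ℝ≥0∞) ≤ 2 * M / t ^ p :=
    (ENNReal.le_div_iff_mul_le (Or.inl htp0) (Or.inl htptop)).mpr
      (hcard.trans hρvol.le)
  -- volume of σ
  have hτvolsum : ∑ s ∈ B, vol T (τ s) q ≤ (B.card : ℝ≥0∞) * (2 * η') := by
    calc ∑ s ∈ B, vol T (τ s) q ≤ ∑ _s ∈ B, 2 * η' :=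
        Finset.sum_le_sum fun s hs => (hτ s (Finset.mem_filter.mp hs).1).2.2
      _ = (B.card : ℝ≥0∞) * (2 * η') := by rw [Finset.sum_const, nsmul_eq_mul]
  have hσvol1 : vol T σ q ≤ ∑ u ∈ T, min (ρ u) t ^ q + ∑ s ∈ B, vol T (τ s) q := by
    have hsum : ∑ s ∈ B, vol T (τ s) q = ∑ u ∈ T, ∑ s ∈ B, τ s u ^ q := by
      rw [Finset.sum_comm]; rfl
    rw [hsum, ← Finset.sum_add_distrib, vol]
    apply Finset.sum_le_sum
    intro u _
    rcases le_total (min (ρ u) t) (B.sup fun s => τ s u) with h | h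
    · calc σ u ^ q = (B.sup fun s => τ s u) ^ q := by rw [hσ]; simp [max_eq_right h]
        _ ≤ ∑ s ∈ B, τ s u ^ q := sup_rpow_le B _ hq0
        _ ≤ _ := le_add_self
    · calc σ u ^ q = min (ρ u) t ^ q := by rw [hσ]; simp [max_eq_left h]
        _ ≤ _ := le_self_add
  have hmin : ∑ u ∈ T, min (ρ u) t ^ q ≤ t ^ (q - p) * vol T ρ p := by
    rw [vol, Finset.mul_sum]
    apply Finset.sum_le_sum
    intro u _
    rcases eq_or_ne (min (ρ u) t) 0 with h0 | h0
    · rw [h0, ENNReal.zero_rpow_of_pos hq0]; exact zero_le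
    · have hmtop : min (ρ u) t ≠ ∞ :=
        ((min_le_right _ _).trans_lt httop.lt_top).ne
      calc min (ρ u) t ^ q = min (ρ u) t ^ (q - p) * min (ρ u) t ^ p := by
            rw [← ENNReal.rpow_add _ _ h0 hmtop, sub_add_cancel]
        _ ≤ t ^ (q - p) * ρ u ^ p :=
            mul_le_mul' (ENNReal.rpow_le_rpow (min_le_right _ _) (by linarith))
              (ENNReal.rpow_le_rpow (min_le_left _ _) hp0.le)
  -- exponent identities
  have e1 : t ^ (q - p) = η' ^ α := by
    rw [ht, ← ENNReal.rpow_mul]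
    congr 1
    rw [hα]
    field_simp
  have etp : t ^ p = η' ^ (p / q) := by
    rw [ht, ← ENNReal.rpow_mul]
    congr 1
    field_simp
  have e3 : η' / t ^ p = η' ^ α := by
    have hsum : α + p / q = 1 := by rw [hα]; field_simp; ring
    have hmul : η' ^ α * t ^ p = η' := by
      rw [etp, ← ENNReal.rpow_add _ _ hη'0 hη'top, hsum, ENNReal.rpow_one]
    calc η' / t ^ p = η' ^ α * t ^ p / t ^ p := by rw [hmul]
      _ = η' ^ α := by rw [mul_div_assoc, ENNReal.div_self htp0 htptop, mul_one]
  -- total volume bound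
  have hVσ : vol T σ q ≤ 6 * (η' ^ α * M) := by
    calc vol T σ q ≤ t ^ (q - p) * vol T ρ p + (B.card : ℝ≥0∞) * (2 * η') :=
          hσvol1.trans (add_le_add hmin hτvolsum)
      _ ≤ t ^ (q - p) * (2 * M) + (2 * M / t ^ p) * (2 * η') :=
          add_le_add (mul_le_mul' le_rfl hρvol.le) (mul_le_mul' hcard' le_rfl)
      _ = 2 * (t ^ (q - p) * M) + 4 * (η' / t ^ p * M) := by
          rw [div_eq_mul_inv, div_eq_mul_inv]; ring
      _ = 2 * (η' ^ α * M) + 4 * (η' ^ α * M) := by rw [e1, e3]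
      _ = 6 * (η' ^ α * M) := by ring
  -- σ is admissible
  have hσadm : Admissible T σ := by
    constructor
    · intro u hu
      have h1 : min (ρ u) t < ∞ := (min_le_right _ _).trans_lt httop.lt_top
      have h2 : (B.sup fun s => τ s u) < ∞ := by
        rw [Finset.sup_lt_iff (bot_lt_top)]
        intro s hs
        exact ((hτ s (Finset.mem_filter.mp hs).1).1 u hu).lt_top
      exact (max_lt h1 h2).ne
    · have h1 : len T σ γ0 ≠ 0 := by
        intro h
        have := hσlen γ0 hγ0
        rw [h] at this
        simp at this
      obtain ⟨u, hu, hu0⟩ := Finset.exists_ne_zero_of_sum_ne_zero h1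
      exact ⟨u, (Finset.mem_filter.mp hu).1, hu0⟩
  -- conclude
  have hcq : cmod T Γ q ≤ 6 * (η' ^ α * M) := by
    refine le_trans (iInf₂_le σ hσadm) (le_trans ?_ hVσ)
    rw [modWith]
    have h1q : (1 : ℝ≥0∞) ≤ Lmin T σ Γ ^ q := by
      calc (1 : ℝ≥0∞) = 1 ^ q := (ENNReal.one_rpow q).symm
        _ ≤ Lmin T σ Γ ^ q := ENNReal.rpow_le_rpow hLσ hq0.le
    calc vol T σ q / Lmin T σ Γ ^ q ≤ vol T σ q / 1 := ENNReal.div_le_div_left h1q _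
      _ = vol T σ q := div_one _
  calc cmod T Γ q / M ≤ 6 * (η' ^ α * M) / M := ENNReal.div_le_div_right hcq _
    _ = 6 * η' ^ α := by
        rw [div_eq_mul_inv, mul_assoc, mul_assoc, ENNReal.mul_inv_cancel hM0 hMtop,
          mul_one]

end CombModFin

open CombModFin

/-- If `mod_p(Γ,S_n) > 0` for all `n` and `sup_{s∈S_n} mod_q(Γ(s),S_n) ≤ η_n → 0`,
then `mod_q(Γ,S_n)/mod_p(Γ,S_n) → 0` as `n → ∞` (here `q > p ≥ 1`). -/
theorem stmt1 {X : Type*} (S : ℕ → Finset (Set X))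
    (hcover : ∀ n, ∀ x : X, ∃ s ∈ S n, x ∈ s)
    (Γ : Set (Set X)) (hΓ : ∀ γ ∈ Γ, γ.Nonempty)
    (p q : ℝ) (hp : 1 ≤ p) (hpq : p < q)
    (hpos : ∀ n, 0 < cmod (S n) Γ p)
    (η : ℕ → ℝ) (hη : ∀ n, 0 < η n)
    (hη0 : Filter.Tendsto η Filter.atTop (nhds 0))
    (hsup : ∀ n, ⨆ s ∈ S n, cmod (S n) {γ ∈ Γ | (γ ∩ s).Nonempty} q
        ≤ ENNReal.ofReal (η n)) :
    Filter.Tendsto (fun n => cmod (S n) Γ q / cmod (S n) Γ p)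
      Filter.atTop (nhds 0) := by
  have hp0 : 0 < p := lt_of_lt_of_le one_pos hp
  have hq0 : 0 < q := hp0.trans hpq
  set α := (q - p) / q with hα
  have hαpos : 0 < α := div_pos (by linarith) hq0
  have key' : ∀ n, cmod (S n) Γ q / cmod (S n) Γ p
      ≤ 6 * ENNReal.ofReal (η n) ^ α := by
    intro n
    refine key (S n) Γ p q hp hpq (hpos n) (η n) (hη n) ?_
    intro s hs
    exact le_trans
      (le_iSup₂ (f := fun s (_ : s ∈ S n) =>
        cmod (S n) {γ ∈ Γ | (γ ∩ s).Nonempty} q) s hs) (hsup n)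
  rw [ENNReal.tendsto_nhds_zero]
  intro ε hε
  set c := min ε 6 / 6 with hc
  have hc0 : c ≠ 0 := by
    rw [hc]
    simp only [ne_eq, ENNReal.div_eq_zero_iff, not_or]
    constructor
    · exact (lt_min hε (by norm_num)).ne'
    · norm_num
  have hctop : c ≠ ∞ := by
    rw [hc]
    exact (ENNReal.div_lt_top ((min_le_right ε 6).trans_lt (by norm_num)).ne (by norm_num)).ne
  set d := c ^ (1 / α) with hd
  have hd0 : d ≠ 0 := by
    simp [hd, ENNReal.rpow_eq_zero_iff, hc0, hctop]
  have hdtop : d ≠ ∞ := ENNReal.rpow_ne_top_of_nonneg (by positivity) hctop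
  have hdR : 0 < d.toReal := ENNReal.toReal_pos hd0 hdtop
  have hev : ∀ᶠ n in Filter.atTop, η n < d.toReal :=
    hη0.eventually_lt_const hdR
  filter_upwards [hev] with n hn
  calc cmod (S n) Γ q / cmod (S n) Γ p ≤ 6 * ENNReal.ofReal (η n) ^ α := key' n
    _ ≤ 6 * c := by
        apply mul_le_mul' le_rfl
        have h1 : ENNReal.ofReal (η n) ≤ d :=
          (ENNReal.ofReal_le_iff_le_toReal hdtop).mpr hn.le
        calc ENNReal.ofReal (η n) ^ α ≤ d ^ α := ENNReal.rpow_le_rpow h1 hαpos.le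
          _ = c := by
            rw [hd, ← ENNReal.rpow_mul, one_div, inv_mul_cancel₀ hαpos.ne',
              ENNReal.rpow_one]
    _ = min ε 6 := by rw [hc, ENNReal.mul_div_cancel' (by norm_num) (by norm_num)]
    _ ≤ ε := min_le_left _ _
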